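/- For row-stochastic matrices P₁, P₂ on a finite state space S and any vector v ∈ R^{|S|}, max_s (P₁ v)(s) - min_s (P₂ v)(s) <= sp([P₁; P₂] v), where [P₁; P₂] is the matrix formed by stacking the rows of P₁ and P₂ (a stochastic matrix from the disjoint union S ⊔ S to S), and consequently max_s (P₁v)(s) - min_s (P₂v)(s) <= (1 - min over s₁,s₂ ∈ S of sum_j min{P₁(j|s₁), P₂(j|s₂)})·sp(v). -/
import Mathlib


/-- The span semi-norm. -/
noncomputable def sp {S : Type*} [Fintype S] [Nonempty S] (v : S → ℝ) : ℝ :=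
  (⨆ i, v i) - ⨅ i, v i

/-- For row-stochastic matrices `P₁, P₂` on a finite state space and any vector `v`,
`max_s (P₁ v)(s) - min_s (P₂ v)(s)` is at most the span of the stacked vector
`[P₁; P₂] v` (over the disjoint union `S ⊕ S`), and consequently it is bounded by
the Dobrushin coefficient of the stacked stochastic matrix times `sp v`. -/
theorem stacked_span_bound {S : Type*} [Fintype S] [Nonempty S]
    (P₁ P₂ : S → S → ℝ)
    (hP₁ : ∀ i j, 0 ≤ P₁ i j) (hrow₁ : ∀ i, ∑ j, P₁ i j = 1)
    (hP₂ : ∀ i j, 0 ≤ P₂ i j) (hrow₂ : ∀ i, ∑ j, P₂ i j = 1)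
    (v : S → ℝ) :
    (⨆ s, ∑ j, P₁ s j * v j) - (⨅ s, ∑ j, P₂ s j * v j) ≤
      sp (Sum.elim (fun s => ∑ j, P₁ s j * v j) (fun s => ∑ j, P₂ s j * v j)) ∧
    (⨆ s, ∑ j, P₁ s j * v j) - (⨅ s, ∑ j, P₂ s j * v j) ≤
      (1 - ⨅ s₁, ⨅ s₂, ∑ j, min (P₁ s₁ j) (P₂ s₂ j)) * sp v := by
  have hM : ∀ i : S, v i ≤ ⨆ j, v j := fun i =>
    le_ciSup (Set.Finite.bddAbove (Set.finite_range v)) i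
  have hm : ∀ i : S, (⨅ j, v j) ≤ v i := fun i =>
    ciInf_le (Set.Finite.bddBelow (Set.finite_range v)) i
  set M := ⨆ i, v i with hMdef
  set m := ⨅ i, v i with hmdef
  have hspv : sp v = M - m := rfl
  have hsp : 0 ≤ sp v := by
    have h1 := hm (Classical.arbitrary S)
    have h2 := hM (Classical.arbitrary S)
    rw [hspv]; linarith
  set f := fun s => ∑ j, P₁ s j * v j with hf
  set g := fun s => ∑ j, P₂ s j * v j with hg
  have key : ∀ s₁ s₂, f s₁ - g s₂ ≤
      (1 - ∑ j, min (P₁ s₁ j) (P₂ s₂ j)) * sp v := by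
    intro s₁ s₂
    have h1 : ∑ j, (P₁ s₁ j - min (P₁ s₁ j) (P₂ s₂ j)) * v j ≤
        ∑ j, (P₁ s₁ j - min (P₁ s₁ j) (P₂ s₂ j)) * M := by
      apply Finset.sum_le_sum; intro j _
      exact mul_le_mul_of_nonneg_left (hM j) (sub_nonneg.2 (min_le_left _ _))
    have h2 : ∑ j, (P₂ s₂ j - min (P₁ s₁ j) (P₂ s₂ j)) * m ≤
        ∑ j, (P₂ s₂ j - min (P₁ s₁ j) (P₂ s₂ j)) * v j := by
      apply Finset.sum_le_sum; intro j _
      exact mul_le_mul_of_nonneg_left (hm j) (sub_nonneg.2 (min_le_right _ _))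
    have ea : ∑ j, (P₁ s₁ j - min (P₁ s₁ j) (P₂ s₂ j)) * M
        = (1 - ∑ j, min (P₁ s₁ j) (P₂ s₂ j)) * M := by
      rw [← Finset.sum_mul, Finset.sum_sub_distrib, hrow₁]
    have eb : ∑ j, (P₂ s₂ j - min (P₁ s₁ j) (P₂ s₂ j)) * m
        = (1 - ∑ j, min (P₁ s₁ j) (P₂ s₂ j)) * m := by
      rw [← Finset.sum_mul, Finset.sum_sub_distrib, hrow₂]
    have expand : f s₁ - g s₂
        = (∑ j, (P₁ s₁ j - min (P₁ s₁ j) (P₂ s₂ j)) * v j)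
          - (∑ j, (P₂ s₂ j - min (P₁ s₁ j) (P₂ s₂ j)) * v j) := by
      simp only [hf, hg, sub_mul, Finset.sum_sub_distrib]
      ring
    rw [hspv, mul_sub]
    linarith
  constructor
  · have a : (⨆ s, f s) ≤ ⨆ i : S ⊕ S, Sum.elim f g i := by
      apply ciSup_le
      intro s
      have := le_ciSup (Set.Finite.bddAbove (Set.finite_range (Sum.elim f g))) (Sum.inl s)
      simpa using this
    have b : (⨅ i : S ⊕ S, Sum.elim f g i) ≤ ⨅ s, g s := by
      apply le_ciInf
      intro s
      have := ciInf_le (Set.Finite.bddBelow (Set.finite_range (Sum.elim f g))) (Sum.inr s)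
      simpa using this
    simp only [sp]
    linarith
  · set c := ⨅ s₁, ⨅ s₂, ∑ j, min (P₁ s₁ j) (P₂ s₂ j) with hc
    have key2 : ∀ s₁ s₂, f s₁ - g s₂ ≤ (1 - c) * sp v := by
      intro s₁ s₂
      refine (key s₁ s₂).trans (mul_le_mul_of_nonneg_right ?_ hsp)
      have h1 : c ≤ ⨅ s₂, ∑ j, min (P₁ s₁ j) (P₂ s₂ j) :=
        ciInf_le (Set.Finite.bddBelow (Set.finite_range _)) s₁
      have h2 : (⨅ s₂, ∑ j, min (P₁ s₁ j) (P₂ s₂ j)) ≤ ∑ j, min (P₁ s₁ j) (P₂ s₂ j) :=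
        ciInf_le (Set.Finite.bddBelow (Set.finite_range _)) s₂
      linarith
    rw [sub_le_iff_le_add]
    apply ciSup_le
    intro s₁
    rw [← sub_le_iff_le_add']
    apply le_ciInf
    intro s₂
    linarith [key2 s₁ s₂]
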